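/- arXiv:2105.05947 — 9 statements merged into one kernel-verified Lean document; each statement's English description precedes it below -/
import Mathlib

section
/- Let ω : ℝ → ℝ be any function, n ≥ 1, X an n×n real symmetric positive semidefinite matrix, and Y an n×n real matrix with Yᵀ = Y, Y·Y = Y, and X = Y·X. Then there exist a real orthogonal matrix U (UᵀU = I) and vectors λˣ, λʸ ∈ ℝⁿ such that X = U·Diag(λˣ)·Uᵀ, Y = U·Diag(λʸ)·Uᵀ, λˣᵢ ≥ 0 and λʸᵢ ∈ {0,1} for every i, λˣᵢ = 0 whenever λʸᵢ = 0, and ∑_{i=1}^n ω(λˣᵢ) = ∑_{i : λʸᵢ = 1} ω(λˣᵢ) + (n − tr(Y))·ω(0). (This identity shows that the mixed-projection problem with spectral regularizer tr(f(X)) = ∑ᵢ ω(λᵢ(X)) and its matrix-perspective reformulation, whose regularizer is tr(g_f(X,Y)) + (n − tr(Y))ω(0), have equal objective values at every feasible point, hence equal optimal values — Theorem 1 of the paper.) -/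
open Matrix BigOperators

lemma spectral_real {n : ℕ} {A : Matrix (Fin n) (Fin n) ℝ} (hA : A.PosSemidef) :
    ∃ (V : Matrix (Fin n) (Fin n) ℝ) (ε : Fin n → ℝ),
      Vᵀ * V = 1 ∧ V * Vᵀ = 1 ∧ A = V * Matrix.diagonal ε * Vᵀ ∧ ∀ i, 0 ≤ ε i := by
  have hH := hA.1
  refine ⟨hH.eigenvectorUnitary, hH.eigenvalues, ?_, ?_, ?_, hA.eigenvalues_nonneg⟩
  · have := Matrix.mem_unitaryGroup_iff'.mp hH.eigenvectorUnitary.2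
    simpa [Matrix.star_eq_conjTranspose, Matrix.conjTranspose_eq_transpose_of_trivial] using this
  · have := Matrix.mem_unitaryGroup_iff.mp hH.eigenvectorUnitary.2
    simpa [Matrix.star_eq_conjTranspose, Matrix.conjTranspose_eq_transpose_of_trivial] using this
  · have := hH.spectral_theorem
    simpa [Matrix.star_eq_conjTranspose, Matrix.conjTranspose_eq_transpose_of_trivial,
      RCLike.ofReal_real_eq_id] using this

lemma quad_le_trace {n : ℕ} {X : Matrix (Fin n) (Fin n) ℝ} (hX : X.PosSemidef)
    (v : Fin n → ℝ) : v ⬝ᵥ (X *ᵥ v) ≤ X.trace * (v ⬝ᵥ v) := by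
  obtain ⟨V, ε, hV1, hV2, hspec, hε⟩ := spectral_real hX
  set z : Fin n → ℝ := Vᵀ *ᵥ v with hz
  have hdot : ∀ w : Fin n → ℝ, v ⬝ᵥ (V *ᵥ w) = z ⬝ᵥ w := by
    intro w
    rw [Matrix.dotProduct_mulVec, hz, Matrix.mulVec_transpose]
  have hquad : v ⬝ᵥ (X *ᵥ v) = ∑ i, ε i * z i ^ 2 := by
    rw [hspec]
    rw [show (V * Matrix.diagonal ε * Vᵀ) *ᵥ v = V *ᵥ (Matrix.diagonal ε *ᵥ (Vᵀ *ᵥ v)) by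
      rw [Matrix.mulVec_mulVec, Matrix.mulVec_mulVec]]
    rw [hdot]
    simp only [dotProduct, Matrix.mulVec_diagonal]
    exact Finset.sum_congr rfl fun i _ => by ring
  have hnorm : v ⬝ᵥ v = ∑ i, z i ^ 2 := by
    have : v ⬝ᵥ (V *ᵥ (Vᵀ *ᵥ v)) = z ⬝ᵥ z := hdot _
    rw [Matrix.mulVec_mulVec, hV2, Matrix.one_mulVec] at this
    rw [this]
    simp only [dotProduct]
    exact Finset.sum_congr rfl fun i _ => by ring
  have htr : X.trace = ∑ i, ε i := by
    rw [hspec, Matrix.trace_mul_cycle, hV1, Matrix.one_mul, Matrix.trace_diagonal]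
  rw [hquad, hnorm, htr, Finset.sum_mul]
  refine Finset.sum_le_sum fun i _ => ?_
  have h1 : z i ^ 2 ≤ ∑ j, z j ^ 2 :=
    Finset.single_le_sum (f := fun j => z j ^ 2) (fun j _ => sq_nonneg _) (Finset.mem_univ i)
  exact mul_le_mul_of_nonneg_left h1 (hε i)

open scoped Classical in
theorem stmt_0 (n : ℕ) (hn : 1 ≤ n) (ω : ℝ → ℝ)
    (X Y : Matrix (Fin n) (Fin n) ℝ)
    (hX : X.PosSemidef) (hYsymm : Yᵀ = Y) (hYproj : Y * Y = Y) (hXY : X = Y * X) :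
    ∃ (U : Matrix (Fin n) (Fin n) ℝ) (lx ly : Fin n → ℝ),
      Uᵀ * U = 1 ∧
      X = U * Matrix.diagonal lx * Uᵀ ∧
      Y = U * Matrix.diagonal ly * Uᵀ ∧
      (∀ i, 0 ≤ lx i) ∧
      (∀ i, ly i = 0 ∨ ly i = 1) ∧
      (∀ i, ly i = 0 → lx i = 0) ∧
      (∑ i, ω (lx i)) =
        (∑ i ∈ Finset.univ.filter (fun i => ly i = 1), ω (lx i))
          + ((n : ℝ) - Y.trace) * ω 0 := by
  have hXt : Xᵀ = X := by
    rw [← Matrix.conjTranspose_eq_transpose_of_trivial]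
    exact hX.1
  have hXYr : X * Y = X := by
    have h := congrArg Matrix.transpose hXY
    rw [Matrix.transpose_mul, hYsymm, hXt] at h
    exact h.symm
  set c : ℝ := X.trace + 1 with hc
  have hdiagX : ∀ i, 0 ≤ X i i := by
    intro i
    have h := hX.dotProduct_mulVec_nonneg (Pi.single i 1)
    simpa [Matrix.mulVec_single, dotProduct, Pi.single_apply] using h
  have htrX : 0 ≤ X.trace := by
    rw [Matrix.trace]
    exact Finset.sum_nonneg fun i _ => hdiagX i
  have hc0 : 0 < c := by rw [hc]; linarith
  have hcX : X.trace < c := by rw [hc]; linarith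
  set W : Matrix (Fin n) (Fin n) ℝ := X + c • ((1 : Matrix (Fin n) (Fin n) ℝ) - Y) with hWdef
  have hIYt : ((1 : Matrix (Fin n) (Fin n) ℝ) - Y)ᵀ = 1 - Y := by
    rw [Matrix.transpose_sub, Matrix.transpose_one, hYsymm]
  have hIY : ((1 : Matrix (Fin n) (Fin n) ℝ) - Y).PosSemidef := by
    have h1 : ((1 : Matrix (Fin n) (Fin n) ℝ) - Y)ᴴ * ((1 : Matrix (Fin n) (Fin n) ℝ) - Y)
        = 1 - Y := by
      rw [Matrix.conjTranspose_eq_transpose_of_trivial, hIYt]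
      simp [Matrix.sub_mul, Matrix.mul_sub, hYproj]
    have := Matrix.posSemidef_conjTranspose_mul_self ((1 : Matrix (Fin n) (Fin n) ℝ) - Y)
    rwa [h1] at this
  have hcIY : (c • ((1 : Matrix (Fin n) (Fin n) ℝ) - Y)).PosSemidef := by
    refine Matrix.PosSemidef.of_dotProduct_mulVec_nonneg ?_ fun x => ?_
    · show (c • ((1 : Matrix (Fin n) (Fin n) ℝ) - Y))ᴴ = c • ((1 : Matrix (Fin n) (Fin n) ℝ) - Y)
      rw [Matrix.conjTranspose_eq_transpose_of_trivial, Matrix.transpose_smul, hIYt]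
    · rw [Matrix.smul_mulVec, dotProduct_smul]
      exact smul_nonneg hc0.le (hIY.dotProduct_mulVec_nonneg x)
  have hWpsd : W.PosSemidef := hX.add hcIY
  obtain ⟨U, μ, hU1, hU2, hWspec, hμ⟩ := spectral_real hWpsd
  set D : Matrix (Fin n) (Fin n) ℝ := Matrix.diagonal μ with hD
  have hWd : Uᵀ * W * U = D := by
    rw [hWspec]
    have h : Uᵀ * (U * D * Uᵀ) * U = (Uᵀ * U) * D * (Uᵀ * U) := by noncomm_ring
    rw [h, hU1, Matrix.one_mul, Matrix.mul_one]
  set P : Matrix (Fin n) (Fin n) ℝ := Uᵀ * Y * U with hPdef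
  set Q : Matrix (Fin n) (Fin n) ℝ := Uᵀ * X * U with hQdef
  have hYW : Y * W = X := by
    rw [hWdef, Matrix.mul_add, Matrix.mul_smul, Matrix.mul_sub, Matrix.mul_one, hYproj,
      sub_self, smul_zero, add_zero, ← hXY]
  have hWY : W * Y = X := by
    rw [hWdef, Matrix.add_mul, Matrix.smul_mul, Matrix.sub_mul, Matrix.one_mul, hYproj,
      sub_self, smul_zero, add_zero, hXYr]
  have hPD : P * D = Q := by
    rw [← hWd, hPdef, hQdef]
    have h : (Uᵀ * Y * U) * (Uᵀ * W * U) = Uᵀ * (Y * ((U * Uᵀ) * W)) * U := by noncomm_ring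
    rw [h, hU2, Matrix.one_mul, hYW]
  have hDP : D * P = Q := by
    rw [← hWd, hPdef, hQdef]
    have h : (Uᵀ * W * U) * (Uᵀ * Y * U) = Uᵀ * (W * ((U * Uᵀ) * Y)) * U := by noncomm_ring
    rw [h, hU2, Matrix.one_mul, hWY]
  have hDQ : D = Q + c • (1 - P) := by
    rw [← hWd, hWdef, hPdef, hQdef]
    have h : Uᵀ * (X + c • ((1 : Matrix (Fin n) (Fin n) ℝ) - Y)) * U
        = Uᵀ * X * U + c • (Uᵀ * U - Uᵀ * Y * U) := by
      simp [Matrix.mul_add, Matrix.add_mul, Matrix.mul_sub, Matrix.sub_mul,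
        Matrix.mul_smul, Matrix.smul_mul, Matrix.mul_one, Matrix.one_mul]
    rw [h, hU1]
  have hE : D - c • (1 : Matrix (Fin n) (Fin n) ℝ) = Matrix.diagonal (fun i => μ i - c) := by
    ext i j
    by_cases h : i = j <;> simp [hD, Matrix.diagonal_apply, Matrix.one_apply, h]
  have hPE : P * Matrix.diagonal (fun i => μ i - c) = Matrix.diagonal (fun i => μ i - c) := by
    rw [← hE]
    have h1 : P * (D - c • 1) = P * D - c • P := by
      rw [Matrix.mul_sub, Matrix.mul_smul, Matrix.mul_one]
    rw [h1, hPD, hDQ]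
    ext i j
    simp [Matrix.sub_apply, Matrix.add_apply, Matrix.smul_apply]
    ring
  -- entries of P off the c-eigenspace
  have hent1 : ∀ i j, μ j ≠ c → P i j = if i = j then 1 else 0 := by
    intro i j hj
    have h := congrFun (congrFun hPE i) j
    rw [Matrix.mul_diagonal, Matrix.diagonal_apply] at h
    have hne : μ j - c ≠ 0 := sub_ne_zero.mpr hj
    by_cases hij : i = j
    · subst hij
      rw [if_pos rfl] at h
      rw [if_pos rfl]
      exact mul_right_cancel₀ hne (by rw [h, _root_.one_mul])
    · simp only [if_neg hij] at h ⊢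
      exact (mul_eq_zero.mp h).resolve_right hne
  -- columns with μ j = c vanish
  have hXU : X * U = U * Q := by
    rw [hQdef]
    have h : U * (Uᵀ * X * U) = (U * Uᵀ) * X * U := by noncomm_ring
    rw [h, hU2, Matrix.one_mul]
  have hYU : Y * U = U * P := by
    rw [hPdef]
    have h : U * (Uᵀ * Y * U) = (U * Uᵀ) * Y * U := by noncomm_ring
    rw [h, hU2, Matrix.one_mul]
  have hcol0 : ∀ j, μ j = c → ∀ i, P i j = 0 := by
    intro j hj
    set p : Fin n → ℝ := fun i => P i j with hp
    set y : Fin n → ℝ := U *ᵥ p with hy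
    have hq : ∀ i, Q i j = c * P i j := by
      intro i
      rw [← hPD, hD, Matrix.mul_diagonal, hj]
      ring
    have hXUP : X * (U * P) = U * Q := by
      rw [← hYU, ← Matrix.mul_assoc, hXYr, hXU]
    have hPcol : P *ᵥ Pi.single j 1 = p := by
      ext i
      simp [Matrix.mulVec_single, hp]
    have hQcol : Q *ᵥ Pi.single j 1 = c • p := by
      ext i
      simp [Matrix.mulVec_single, hq i, hp]
    have hXy : X *ᵥ y = c • y := by
      rw [hy, ← hPcol, Matrix.mulVec_mulVec, Matrix.mulVec_mulVec, Matrix.mul_assoc,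
        hXUP, ← Matrix.mulVec_mulVec, hQcol, Matrix.mulVec_smul, ← hy, hPcol, ← hy]
    have hyy0 : 0 ≤ y ⬝ᵥ y := by
      exact Finset.sum_nonneg fun i _ => mul_self_nonneg _
    have hyXy : y ⬝ᵥ (X *ᵥ y) = c * (y ⬝ᵥ y) := by
      rw [hXy, dotProduct_smul, smul_eq_mul]
    have hle := quad_le_trace hX y
    have hy0 : y ⬝ᵥ y = 0 := by nlinarith
    have hyz : y = 0 := dotProduct_self_eq_zero.mp hy0
    have hpz : p = 0 := by
      have h1 : Uᵀ *ᵥ (U *ᵥ p) = p := by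
        rw [Matrix.mulVec_mulVec, hU1, Matrix.one_mulVec]
      rw [← h1, ← hy, hyz, Matrix.mulVec_zero]
    intro i
    exact congrFun hpz i
  -- the diagonalizations
  set lx : Fin n → ℝ := fun i => if μ i = c then 0 else μ i with hlx
  set ly : Fin n → ℝ := fun i => if μ i = c then 0 else 1 with hly
  have hPdiag : P = Matrix.diagonal ly := by
    ext i j
    by_cases hj : μ j = c
    · rw [hcol0 j hj i, Matrix.diagonal_apply]
      by_cases hij : i = j
      · subst hij; simp [hly, hj]
      · simp [hij]
    · rw [hent1 i j hj, Matrix.diagonal_apply]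
      by_cases hij : i = j
      · subst hij; simp [hly, hj]
      · simp [hij]
  have hQdiag : Q = Matrix.diagonal lx := by
    ext i j
    have h : Q i j = P i j * μ j := by rw [← hPD, hD, Matrix.mul_diagonal]
    rw [h, Matrix.diagonal_apply]
    by_cases hj : μ j = c
    · rw [hcol0 j hj i]
      by_cases hij : i = j
      · subst hij; simp [hlx, hj]
      · simp [hij]
    · rw [hent1 i j hj]
      by_cases hij : i = j
      · subst hij; simp [hlx, hj]
      · simp [hij]
  have hXeq : X = U * Matrix.diagonal lx * Uᵀ := by
    rw [← hQdiag, hQdef]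
    have h : U * (Uᵀ * X * U) * Uᵀ = (U * Uᵀ) * X * (U * Uᵀ) := by noncomm_ring
    rw [h, hU2, Matrix.one_mul, Matrix.mul_one]
  have hYeq : Y = U * Matrix.diagonal ly * Uᵀ := by
    rw [← hPdiag, hPdef]
    have h : U * (Uᵀ * Y * U) * Uᵀ = (U * Uᵀ) * Y * (U * Uᵀ) := by noncomm_ring
    rw [h, hU2, Matrix.one_mul, Matrix.mul_one]
  refine ⟨U, lx, ly, hU1, hXeq, hYeq, ?_, ?_, ?_, ?_⟩
  · intro i
    by_cases h : μ i = c <;> simp [hlx, h, hμ i]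
  · intro i
    by_cases h : μ i = c <;> simp [hly, h]
  · intro i hi
    by_cases h : μ i = c
    · simp [hlx, h]
    · exfalso; simp [hly, h] at hi
  · -- sum identity
    have htrY : Y.trace = ∑ i, ly i := by
      rw [hYeq, Matrix.trace_mul_cycle, hU1, Matrix.one_mul, Matrix.trace_diagonal]
    have hnotone : ∀ i, ¬ ly i = 1 ↔ μ i = c := by
      intro i
      by_cases h : μ i = c <;> simp [hly, h]
    have hsplit := Finset.sum_filter_add_sum_filter_not Finset.univ
      (fun i => ly i = 1) (fun i => ω (lx i))
    rw [← hsplit]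
    congr 1
    have hval : ∀ i ∈ Finset.univ.filter (fun i => ¬ ly i = 1), ω (lx i) = ω 0 := by
      intro i hi
      rw [Finset.mem_filter] at hi
      have := (hnotone i).mp hi.2
      simp [hlx, this]
    rw [Finset.sum_congr rfl hval, Finset.sum_const, nsmul_eq_mul]
    congr 1
    -- card = n - trace
    have h1 : ∑ i, ly i = ((Finset.univ.filter (fun i => ly i = 1)).card : ℝ) := by
      rw [← Finset.sum_filter_add_sum_filter_not Finset.univ (fun i => ly i = 1)
        (fun i => ly i)]
      have ha : ∀ i ∈ Finset.univ.filter (fun i => ly i = 1), ly i = 1 := by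
        intro i hi; exact (Finset.mem_filter.mp hi).2
      have hb : ∀ i ∈ Finset.univ.filter (fun i => ¬ ly i = 1), ly i = 0 := by
        intro i hi
        have := (hnotone i).mp (Finset.mem_filter.mp hi).2
        simp [hly, this]
      rw [Finset.sum_congr rfl ha, Finset.sum_congr rfl hb, Finset.sum_const,
        Finset.sum_const, nsmul_eq_mul, nsmul_eq_mul]
      ring
    have h2 : (Finset.univ.filter (fun i => ly i = 1)).card
        + (Finset.univ.filter (fun i => ¬ ly i = 1)).card = n := by
      rw [Finset.card_filter_add_card_filter_not]
      simp
    rw [htrY, h1]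
    have := congrArg (fun k : ℕ => (k : ℝ)) h2
    push_cast at this
    linarith
end

section
/- Let Ω : ℝ → ℝ satisfy Ω(0) ≥ 0, let c, x̄ ∈ ℝ, and let s ∈ ℝ be a subgradient of Ω at x̄, i.e., Ω(y) ≥ Ω(x̄) + s·(y − x̄) for all y ∈ ℝ. Then for every z ∈ {0,1}, every x ∈ ℝ with x = 0 whenever z = 0, and every ρ ∈ ℝ with ρ ≥ Ω(x) + c·z, the perspective cut ρ ≥ (c + Ω(x̄))·z + s·(x − x̄·z) holds. (Proposition 1: validity of perspective cuts for the epigraph of a convex function under a logical on/off constraint.) -/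
/-- Proposition 1: validity of perspective cuts for the epigraph of a convex function
under a logical on/off constraint. -/
theorem stmt_10 (Ω : ℝ → ℝ) (c xbar s : ℝ) (hΩ0 : 0 ≤ Ω 0)
    (hs : ∀ y : ℝ, Ω xbar + s * (y - xbar) ≤ Ω y)
    (z x ρ : ℝ) (hz : z = 0 ∨ z = 1) (hxz : z = 0 → x = 0)
    (hρ : Ω x + c * z ≤ ρ) :
    (c + Ω xbar) * z + s * (x - xbar * z) ≤ ρ := by
  rcases hz with h | h
  · have hx := hxz h
    subst h hx
    simp only [mul_zero, sub_zero, zero_sub] at *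
    linarith
  · subst h
    have := hs x
    simp only [mul_one] at *
    linarith
end

section
/- Let A be an n×m real matrix and k a natural number. Then inf{ (1/2)‖X − A‖_F² : X an n×m real matrix with rank(X) ≤ k } = inf{ (1/2)tr(θ) − tr(AᵀX) + (1/2)‖A‖_F² : X an n×m real matrix, θ an n×n real symmetric matrix, Y an m×m real symmetric matrix such that Y and I − Y are positive semidefinite, tr(Y) ≤ k, and the (n+m)×(n+m) block matrix [[θ, X],[Xᵀ, Y]] is positive semidefinite }. (The rank-k SVD / low-rank approximation problem admits an exact convex semidefinite reformulation via the matrix perspective reformulation technique.) -/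
open Matrix BigOperators

namespace Stmt11Aux

variable {ι : Type*} [Fintype ι] [DecidableEq ι]

lemma real_conjT {a b : Type*} (M : Matrix a b ℝ) : Mᴴ = Mᵀ :=
  Matrix.conjTranspose_eq_transpose_of_trivial M

lemma conj_mul (U : Matrix ι ι ℝ) (hU : Uᵀ * U = 1) (f g : ι → ℝ) :
    (U * diagonal f * Uᵀ) * (U * diagonal g * Uᵀ)
      = U * diagonal (fun i => f i * g i) * Uᵀ := by
  have h : (U * diagonal f * Uᵀ) * (U * diagonal g * Uᵀ)
      = U * (diagonal f * ((Uᵀ * U) * (diagonal g * Uᵀ))) := by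
    simp only [Matrix.mul_assoc]
  rw [h, hU, Matrix.one_mul, ← Matrix.mul_assoc (diagonal f), diagonal_mul_diagonal,
    ← Matrix.mul_assoc]

lemma conj_trace (U : Matrix ι ι ℝ) (hU : Uᵀ * U = 1) (f : ι → ℝ) :
    (U * diagonal f * Uᵀ).trace = ∑ i, f i := by
  rw [Matrix.trace_mul_comm, ← Matrix.mul_assoc, hU, Matrix.one_mul, Matrix.trace_diagonal]

lemma conj_transpose' (U : Matrix ι ι ℝ) (f : ι → ℝ) :
    (U * diagonal f * Uᵀ)ᵀ = U * diagonal f * Uᵀ := by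
  simp [Matrix.transpose_mul, Matrix.mul_assoc]

lemma conj_psd (U : Matrix ι ι ℝ) (f : ι → ℝ) (hf : ∀ i, 0 ≤ f i) :
    (U * diagonal f * Uᵀ).PosSemidef := by
  have := (Matrix.PosSemidef.diagonal (n := ι) (R := ℝ) (d := f) hf).mul_mul_conjTranspose_same U
  rwa [real_conjT] at this

lemma conj_one (U : Matrix ι ι ℝ) (hU2 : U * Uᵀ = 1) :
    U * diagonal (fun _ => (1:ℝ)) * Uᵀ = 1 := by
  rw [diagonal_one, Matrix.mul_one, hU2]

lemma psd_diag_nonneg {M : Matrix ι ι ℝ} (h : M.PosSemidef) (i : ι) : 0 ≤ M i i := by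
  have := h.dotProduct_mulVec_nonneg (Pi.single i 1)
  simpa [Matrix.mulVec_single, dotProduct, Pi.single_apply] using this

lemma psd_trace_nonneg {M : Matrix ι ι ℝ} (h : M.PosSemidef) : 0 ≤ M.trace :=
  Finset.sum_nonneg fun i _ => psd_diag_nonneg h i

lemma trace_fromBlocks {a b : Type*} [Fintype a] [Fintype b]
    (A : Matrix a a ℝ) (B : Matrix a b ℝ) (C : Matrix b a ℝ) (D : Matrix b b ℝ) :
    (fromBlocks A B C D).trace = A.trace + D.trace := by
  simp [Matrix.trace, Fintype.sum_sum_type, Matrix.diag]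

lemma sum_sq_eq_trace {n m : ℕ} (M : Matrix (Fin n) (Fin m) ℝ) :
    (Mᵀ * M).trace = ∑ i, ∑ j, (M i j)^2 := by
  rw [Finset.sum_comm]
  simp [Matrix.trace, Matrix.mul_apply, Matrix.diag, sq]



lemma greedy {N k : ℕ} (μ z : Fin N → ℝ) (hμ : ∀ i, 0 ≤ μ i)
    (hz0 : ∀ i, 0 ≤ z i) (hz1 : ∀ i, z i ≤ 1) (hsum : ∑ i, z i ≤ k)
    (S : Finset (Fin N)) (hcard : S.card = k)
    (hS : ∀ i ∈ S, ∀ j ∈ Sᶜ, μ j ≤ μ i) (hkN : k < N) :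
    ∑ i, μ i * z i ≤ ∑ i ∈ S, μ i := by
  have hne : Sᶜ.Nonempty := by
    rw [← Finset.card_pos, Finset.card_compl, hcard, Fintype.card_fin]
    omega
  obtain ⟨j₀, hj₀, ht⟩ := Finset.exists_mem_eq_sup' hne μ
  set t := Sᶜ.sup' hne μ with htdef
  have ht0 : 0 ≤ t := ht ▸ hμ j₀
  have htle : ∀ i ∈ S, t ≤ μ i := fun i hi => ht ▸ hS i hi j₀ hj₀
  have htge : ∀ j ∈ Sᶜ, μ j ≤ t := fun j hj => Finset.le_sup' μ hj
  have hsplit : ∑ i ∈ S, μ i * z i + ∑ i ∈ Sᶜ, μ i * z i = ∑ i, μ i * z i :=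
    Finset.sum_add_sum_compl S _
  have hzsplit : ∑ i ∈ S, z i + ∑ i ∈ Sᶜ, z i = ∑ i, z i :=
    Finset.sum_add_sum_compl S _
  have h1 : ∑ i ∈ Sᶜ, μ i * z i ≤ t * ∑ i ∈ Sᶜ, z i := by
    rw [Finset.mul_sum]
    exact Finset.sum_le_sum fun i hi => mul_le_mul_of_nonneg_right (htge i hi) (hz0 i)
  have h2 : t * ∑ i ∈ Sᶜ, z i ≤ t * ((k:ℝ) - ∑ i ∈ S, z i) := by
    apply mul_le_mul_of_nonneg_left _ ht0
    linarith
  have hk : (k:ℝ) = ∑ _i ∈ S, (1:ℝ) := by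
    rw [Finset.sum_const, hcard]; simp
  have h3 : ∑ i ∈ S, μ i * z i + t * ((k:ℝ) - ∑ i ∈ S, z i)
      = ∑ i ∈ S, (μ i * z i + t * (1 - z i)) := by
    rw [hk, ← Finset.sum_sub_distrib, Finset.mul_sum, ← Finset.sum_add_distrib]
  have h4 : ∑ i ∈ S, (μ i * z i + t * (1 - z i)) ≤ ∑ i ∈ S, μ i := by
    apply Finset.sum_le_sum
    intro i hi
    nlinarith [htle i hi, hz1 i, hz0 i]
  linarith

lemma exists_topk {N k : ℕ} (hk : k ≤ N) (μ : Fin N → ℝ) :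
    ∃ S : Finset (Fin N), S.card = k ∧ ∀ i ∈ S, ∀ j ∈ Sᶜ, μ j ≤ μ i := by
  rcases Nat.eq_zero_or_pos k with rfl | hk0
  · exact ⟨∅, rfl, by simp⟩
  · have hNk : N - k < N := by omega
    set σ := Tuple.sort μ with hσ
    refine ⟨(Finset.Ici (⟨N - k, hNk⟩ : Fin N)).image σ, ?_, ?_⟩
    · rw [Finset.card_image_of_injective _ σ.injective, Fin.card_Ici]
      show N - (N - k) = k
      omega
    · intro i hi j hj
      obtain ⟨b, hb, rfl⟩ := Finset.mem_image.mp hi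
      have hj' : σ.symm j ∉ Finset.Ici (⟨N - k, hNk⟩ : Fin N) := by
        intro h
        exact (Finset.mem_compl.mp hj)
          (Finset.mem_image.mpr ⟨_, h, σ.apply_symm_apply j⟩)
      have hlt : σ.symm j ≤ b := by
        rw [Finset.mem_Ici, not_le] at hj'
        exact le_of_lt (lt_of_lt_of_le hj' (Finset.mem_Ici.mp hb))
      have := Tuple.monotone_sort μ hlt
      simpa [hσ] using this


lemma spectral_package {N : ℕ} {B : Matrix (Fin N) (Fin N) ℝ} (hB : B.PosSemidef) :
    ∃ (U : Matrix (Fin N) (Fin N) ℝ) (μ : Fin N → ℝ),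
      Uᵀ * U = 1 ∧ U * Uᵀ = 1 ∧ B = U * diagonal μ * Uᵀ ∧ (∀ i, 0 ≤ μ i) ∧
      Fintype.card {i // μ i ≠ 0} = B.rank := by
  have h := hB.1
  refine ⟨(h.eigenvectorUnitary : Matrix (Fin N) (Fin N) ℝ), h.eigenvalues, ?_, ?_, ?_,
    hB.eigenvalues_nonneg, (h.rank_eq_card_non_zero_eigs).symm⟩
  · have := Matrix.mem_unitaryGroup_iff'.mp (h.eigenvectorUnitary).2
    rwa [Matrix.star_eq_conjTranspose, real_conjT] at this
  · have := Matrix.mem_unitaryGroup_iff.mp (h.eigenvectorUnitary).2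
    rwa [Matrix.star_eq_conjTranspose, real_conjT] at this
  · have := h.spectral_theorem
    rwa [Unitary.conjStarAlgAut_apply, Matrix.star_eq_conjTranspose, real_conjT, RCLike.ofReal_real_eq_id,
      Function.id_comp] at this


end Stmt11Aux

namespace Stmt11Aux

lemma feas {n m : ℕ} (k : ℕ) (X : Matrix (Fin n) (Fin m) ℝ) (hX : X.rank ≤ k) :
    ∃ (Y : Matrix (Fin m) (Fin m) ℝ),
      Yᵀ = Y ∧ Y.PosSemidef ∧ (1 - Y).PosSemidef ∧ Y.trace ≤ (k:ℝ) ∧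
      (fromBlocks (X * Xᵀ) X Xᵀ Y).PosSemidef := by
  have hBpsd : (Xᵀ * X).PosSemidef := by
    have := Matrix.posSemidef_conjTranspose_mul_self X
    rwa [real_conjT] at this
  obtain ⟨U, μ, h1, h2, hspec, hμ, hcard⟩ := spectral_package hBpsd
  set ind : Fin m → ℝ := fun i => if μ i ≠ 0 then 1 else 0 with hind
  set Y : Matrix (Fin m) (Fin m) ℝ := U * diagonal ind * Uᵀ with hYdef
  have hind0 : ∀ i, 0 ≤ ind i := by
    intro i; simp only [hind]; split <;> norm_num
  have hYt : Yᵀ = Y := conj_transpose' U ind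
  have hYpsd : Y.PosSemidef := conj_psd U ind hind0
  have hd : diagonal (fun i => 1 - ind i)
      = diagonal (fun _ => (1:ℝ)) - diagonal ind := by
    ext i j
    by_cases h : i = j <;> simp [h, Matrix.diagonal_apply]
  have h1mY : 1 - Y = U * diagonal (fun i => 1 - ind i) * Uᵀ := by
    rw [hd, Matrix.mul_sub, Matrix.sub_mul, conj_one U h2, hYdef]
  have h1mYpsd : (1 - Y).PosSemidef := by
    rw [h1mY]
    exact conj_psd U _ (fun i => by simp only [hind]; split <;> norm_num)
  have htr : Y.trace ≤ (k : ℝ) := by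
    rw [hYdef, conj_trace U h1]
    have hs : ∑ i, ind i = ((Finset.univ.filter (fun i => μ i ≠ 0)).card : ℝ) :=
      Finset.sum_boole _ _
    rw [hs]
    have hc : (Finset.univ.filter (fun i => μ i ≠ 0)).card = X.rank := by
      rw [← Matrix.rank_transpose_mul_self X, ← hcard, Fintype.card_subtype]
    rw [hc]
    exact_mod_cast hX
  have hM : (X * U)ᵀ * (X * U) = diagonal μ := by
    calc (X * U)ᵀ * (X * U) = Uᵀ * (Xᵀ * X) * U := by
          simp only [Matrix.transpose_mul, Matrix.mul_assoc]
      _ = Uᵀ * (U * diagonal μ * Uᵀ) * U := by rw [← hspec]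
      _ = diagonal μ := by
          simp only [Matrix.mul_assoc]
          rw [h1, Matrix.mul_one, ← Matrix.mul_assoc, h1, Matrix.one_mul]
  have hXUD : X * U * diagonal (fun i => 1 - ind i) = 0 := by
    ext a j
    rw [Matrix.mul_diagonal, Matrix.zero_apply]
    by_cases hμj : μ j = 0
    · have hsum : ∑ b, ((X * U) b j)^2 = 0 := by
        have h' : ((X * U)ᵀ * (X * U)) j j = μ j := by rw [hM, Matrix.diagonal_apply_eq]
        rw [Matrix.mul_apply] at h'
        simp only [Matrix.transpose_apply] at h'
        rw [hμj] at h'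
        calc ∑ b, ((X * U) b j)^2 = ∑ b, (X * U) b j * (X * U) b j := by
              simp [sq]
          _ = 0 := h'
      have hcol : (X * U) a j = 0 := by
        have := (Finset.sum_eq_zero_iff_of_nonneg
          (fun b _ => sq_nonneg ((X * U) b j))).mp hsum a (Finset.mem_univ a)
        exact (pow_eq_zero_iff two_ne_zero).mp this
      rw [hcol, zero_mul]
    · have : ind j = 1 := by simp [hind, hμj]
      rw [this]; ring
  have hXY : X * Y = X := by
    have h0 : X * (1 - Y) = 0 := by
      rw [h1mY, ← Matrix.mul_assoc, ← Matrix.mul_assoc, hXUD, Matrix.zero_mul]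
    rw [Matrix.mul_sub, Matrix.mul_one, sub_eq_zero] at h0
    exact h0.symm
  have hYY : Y * Y = Y := by
    have hii : (fun i => ind i * ind i) = ind := by
      funext i; simp only [hind]; split <;> norm_num
    rw [hYdef, conj_mul U h1, hii]
  have hYXt : Y * Xᵀ = Xᵀ := by
    have h' := congrArg Matrix.transpose hXY
    rwa [Matrix.transpose_mul, hYt] at h'
  have hblock : fromBlocks (X * Xᵀ) X Xᵀ Y
      = (fromBlocks 0 0 Xᵀ Y)ᵀ * (fromBlocks 0 0 Xᵀ Y) := by
    rw [Matrix.fromBlocks_transpose, Matrix.fromBlocks_multiply]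
    simp [hYt, hYY, hYXt, hXY]
  have hMpsd : (fromBlocks (X * Xᵀ) X Xᵀ Y).PosSemidef := by
    rw [hblock, ← real_conjT]
    exact Matrix.posSemidef_conjTranspose_mul_self _
  exact ⟨Y, hYt, hYpsd, h1mYpsd, htr, hMpsd⟩

end Stmt11Aux

namespace Stmt11Aux

lemma lb {n m k : ℕ} (A X : Matrix (Fin n) (Fin m) ℝ)
    (θ : Matrix (Fin n) (Fin n) ℝ) (Y : Matrix (Fin m) (Fin m) ℝ)
    (hY : Y.PosSemidef) (hY1 : (1 - Y).PosSemidef) (htrY : Y.trace ≤ (k:ℝ))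
    (hMpsd : (fromBlocks θ X Xᵀ Y).PosSemidef) :
    ∃ Z : Matrix (Fin n) (Fin m) ℝ, Z.rank ≤ k ∧
      (1/2) * ∑ i, ∑ j, (Z i j - A i j)^2
        ≤ (1/2) * θ.trace - (Aᵀ * X).trace + (1/2) * ∑ i, ∑ j, (A i j)^2 := by
  have hBpsd : (Aᵀ * A).PosSemidef := by
    have := Matrix.posSemidef_conjTranspose_mul_self A
    rwa [real_conjT] at this
  obtain ⟨U, μ, h1, h2, hspec, hμ, _hcard⟩ := spectral_package hBpsd
  -- Step A : trace inequality from PSD of congruence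
  have key : 0 ≤ θ.trace - 2 * (Aᵀ * X).trace + (Aᵀ * A * Y).trace := by
    set E : Matrix (Fin n ⊕ Fin m) (Fin n ⊕ Fin m) ℝ := fromBlocks 1 0 (-Aᵀ) 0 with hE
    have hN : (Eᴴ * fromBlocks θ X Xᵀ Y * E).PosSemidef :=
      hMpsd.conjTranspose_mul_mul_same E
    rw [real_conjT] at hN
    have htrN := psd_trace_nonneg hN
    have hEt : Eᵀ = fromBlocks 1 (-A) 0 0 := by
      rw [hE, Matrix.fromBlocks_transpose]
      congr 1 <;> simp
    have hcomp : Eᵀ * fromBlocks θ X Xᵀ Y * E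
        = fromBlocks (θ - X * Aᵀ - A * Xᵀ + A * (Y * Aᵀ)) 0 0 0 := by
      rw [hEt, hE, Matrix.fromBlocks_multiply, Matrix.fromBlocks_multiply]
      congr 1 <;>
        simp [Matrix.mul_neg, Matrix.neg_mul, Matrix.add_mul, Matrix.mul_add,
          Matrix.mul_assoc, sub_eq_add_neg] <;>
        abel
    rw [hcomp, trace_fromBlocks] at htrN
    have e1 : (X * Aᵀ).trace = (Aᵀ * X).trace := Matrix.trace_mul_comm _ _
    have e2 : (A * Xᵀ).trace = (Aᵀ * X).trace := by
      rw [Matrix.trace_mul_comm, ← Matrix.trace_transpose (Xᵀ * A),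
        Matrix.transpose_mul, Matrix.transpose_transpose]
    have e3 : (A * (Y * Aᵀ)).trace = (Aᵀ * A * Y).trace := by
      rw [← Matrix.mul_assoc, Matrix.trace_mul_cycle]
    rw [Matrix.trace_add, Matrix.trace_sub, Matrix.trace_sub, e1, e2, e3] at htrN
    simp only [Matrix.trace_zero, add_zero] at htrN
    linarith
  -- Step B : Ky Fan type bound
  set Zm := Uᵀ * Y * U with hZm
  have hZpsd : Zm.PosSemidef := by
    have := hY.conjTranspose_mul_mul_same U
    rwa [real_conjT] at this
  have hz0 : ∀ i, 0 ≤ Zm i i := psd_diag_nonneg hZpsd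
  have h1mZ : Uᵀ * (1 - Y) * U = 1 - Zm := by
    rw [Matrix.mul_sub, Matrix.sub_mul, Matrix.mul_one, h1, hZm]
  have hz1 : ∀ i, Zm i i ≤ 1 := by
    intro i
    have hp : (1 - Zm).PosSemidef := by
      rw [← h1mZ]
      have := hY1.conjTranspose_mul_mul_same U
      rwa [real_conjT] at this
    have h' := psd_diag_nonneg hp i
    simp only [Matrix.sub_apply, Matrix.one_apply_eq] at h'
    linarith
  have hzsum : ∑ i, Zm i i = Y.trace := by
    have hs : ∑ i, Zm i i = Zm.trace := by simp [Matrix.trace, Matrix.diag]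
    rw [hs, hZm, Matrix.trace_mul_cycle, h2, Matrix.one_mul]
  have htrBY : (Aᵀ * A * Y).trace = ∑ i, μ i * Zm i i := by
    rw [hspec]
    calc ((U * diagonal μ * Uᵀ) * Y).trace
        = (U * (diagonal μ * (Uᵀ * Y))).trace := by simp only [Matrix.mul_assoc]
      _ = ((diagonal μ * (Uᵀ * Y)) * U).trace := by rw [Matrix.trace_mul_comm]
      _ = (diagonal μ * (Uᵀ * Y * U)).trace := by simp only [Matrix.mul_assoc]
      _ = ∑ i, μ i * Zm i i := by
          rw [← hZm]
          simp [Matrix.trace, Matrix.diag, Matrix.diagonal_mul]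
  obtain ⟨S, hSk, hKF⟩ : ∃ S : Finset (Fin m), S.card ≤ k ∧
      (Aᵀ * A * Y).trace ≤ ∑ i ∈ S, μ i := by
    rcases le_or_gt m k with hmk | hkm
    · refine ⟨Finset.univ, by simpa using hmk, ?_⟩
      rw [htrBY]
      exact Finset.sum_le_sum fun i _ => by nlinarith [hμ i, hz0 i, hz1 i]
    · obtain ⟨S, hcardS, hS⟩ := exists_topk (le_of_lt hkm) μ
      refine ⟨S, le_of_eq hcardS, ?_⟩
      rw [htrBY]
      exact greedy μ (fun i => Zm i i) hμ hz0 hz1 (by rw [hzsum]; exact htrY)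
        S hcardS hS hkm
  -- Step C : the truncated SVD matrix
  set ind : Fin m → ℝ := fun i => if i ∈ S then 1 else 0 with hind
  set P : Matrix (Fin m) (Fin m) ℝ := U * diagonal ind * Uᵀ with hP
  refine ⟨A * P, ?_, ?_⟩
  · have hAP : A * P = ((A * U) * diagonal ind) * Uᵀ := by
      rw [hP]; simp only [Matrix.mul_assoc]
    rw [hAP]
    refine le_trans (Matrix.rank_mul_le_left _ _) ?_
    refine le_trans (Matrix.rank_mul_le_right _ _) ?_
    rw [Matrix.rank_diagonal]
    have hfil : (Finset.univ.filter fun i => ind i ≠ 0) = S := by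
      ext i; by_cases h : i ∈ S <;> simp [hind, h]
    calc Fintype.card {i // ind i ≠ 0}
        = (Finset.univ.filter fun i => ind i ≠ 0).card := Fintype.card_subtype _
      _ = S.card := by rw [hfil]
      _ ≤ k := hSk
  · set Q : Matrix (Fin m) (Fin m) ℝ := U * diagonal (fun i => ind i - 1) * Uᵀ with hQdef
    have hdd : diagonal (fun i => ind i - 1)
        = diagonal ind - diagonal (fun _ => (1:ℝ)) := by
      ext i j; by_cases h : i = j <;> simp [h, Matrix.diagonal_apply]
    have hQ : A * P - A = A * Q := by
      rw [hQdef, hdd, Matrix.mul_sub, Matrix.sub_mul, conj_one U h2,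
        Matrix.mul_sub, Matrix.mul_one, hP]
    have hQt : Qᵀ = Q := conj_transpose' U _
    have htrQ : ((A * Q)ᵀ * (A * Q)).trace = (Aᵀ * A).trace - ∑ i ∈ S, μ i := by
      have hQBQ : (A * Q)ᵀ * (A * Q) = Q * (Aᵀ * A) * Q := by
        rw [Matrix.transpose_mul, hQt]
        simp only [Matrix.mul_assoc]
      rw [hQBQ, hspec, hQdef, conj_mul U h1]
      have hQB : (U * diagonal (fun i => (fun i => ind i - 1) i * μ i) * Uᵀ)
          * (U * diagonal (fun i => ind i - 1) * Uᵀ)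
          = U * diagonal (fun i => (ind i - 1) * μ i * (ind i - 1)) * Uᵀ :=
        conj_mul U h1 _ _
      rw [hQB, conj_trace U h1]
      have hterm : ∀ i, (ind i - 1) * μ i * (ind i - 1)
          = if i ∈ Sᶜ then μ i else 0 := by
        intro i
        by_cases h : i ∈ S <;> simp [hind, h, Finset.mem_compl] <;> ring
      rw [Finset.sum_congr rfl (fun i _ => hterm i)]
      rw [Finset.sum_ite_mem, Finset.univ_inter]
      have := Finset.sum_add_sum_compl S μ
      rw [conj_trace U h1]
      linarith
    have hsumZA : ∑ i, ∑ j, ((A * P) i j - A i j)^2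
        = (Aᵀ * A).trace - ∑ i ∈ S, μ i := by
      have h' : ∑ i, ∑ j, ((A * P) i j - A i j)^2
          = ((A * P - A)ᵀ * (A * P - A)).trace := by
        rw [sum_sq_eq_trace]
        apply Finset.sum_congr rfl; intro i _
        apply Finset.sum_congr rfl; intro j _
        rw [Matrix.sub_apply]
      rw [h', hQ, htrQ]
    have hA2 : ∑ i, ∑ j, (A i j)^2 = (Aᵀ * A).trace := (sum_sq_eq_trace A).symm
    rw [hsumZA, hA2]
    linarith

end Stmt11Aux

open Matrix BigOperators

/-- The rank-k SVD / low-rank approximation problem admits an exact convex semidefinite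
reformulation via the matrix perspective reformulation technique. -/
theorem stmt_11 (n m k : ℕ) (A : Matrix (Fin n) (Fin m) ℝ) :
    sInf {v : ℝ | ∃ X : Matrix (Fin n) (Fin m) ℝ, X.rank ≤ k ∧
        v = (1 / 2) * ∑ i, ∑ j, (X i j - A i j) ^ 2}
    = sInf {v : ℝ | ∃ (X : Matrix (Fin n) (Fin m) ℝ) (θ : Matrix (Fin n) (Fin n) ℝ)
        (Y : Matrix (Fin m) (Fin m) ℝ),
        θᵀ = θ ∧ Yᵀ = Y ∧ Y.PosSemidef ∧ (1 - Y).PosSemidef ∧ Y.trace ≤ (k : ℝ) ∧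
        (Matrix.fromBlocks θ X Xᵀ Y).PosSemidef ∧
        v = (1 / 2) * θ.trace - (Aᵀ * X).trace + (1 / 2) * ∑ i, ∑ j, (A i j) ^ 2} := by
  set S1 : Set ℝ := {v : ℝ | ∃ X : Matrix (Fin n) (Fin m) ℝ, X.rank ≤ k ∧
        v = (1 / 2) * ∑ i, ∑ j, (X i j - A i j) ^ 2} with hS1
  set S2 : Set ℝ := {v : ℝ | ∃ (X : Matrix (Fin n) (Fin m) ℝ) (θ : Matrix (Fin n) (Fin n) ℝ)
        (Y : Matrix (Fin m) (Fin m) ℝ),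
        θᵀ = θ ∧ Yᵀ = Y ∧ Y.PosSemidef ∧ (1 - Y).PosSemidef ∧ Y.trace ≤ (k : ℝ) ∧
        (Matrix.fromBlocks θ X Xᵀ Y).PosSemidef ∧
        v = (1 / 2) * θ.trace - (Aᵀ * X).trace + (1 / 2) * ∑ i, ∑ j, (A i j) ^ 2} with hS2
  have h0rank : (0 : Matrix (Fin n) (Fin m) ℝ).rank ≤ k := by
    rw [Matrix.rank_zero]; exact Nat.zero_le k
  -- every low-rank X gives a feasible SDP point with the same value
  have mem2 : ∀ X : Matrix (Fin n) (Fin m) ℝ, X.rank ≤ k →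
      ((1/2) * ∑ i, ∑ j, (X i j - A i j)^2) ∈ S2 := by
    intro X hX
    obtain ⟨Y, hYt, hYpsd, h1mY, htr, hMpsd⟩ := Stmt11Aux.feas k X hX
    refine ⟨X, X * Xᵀ, Y, ?_, hYt, hYpsd, h1mY, htr, hMpsd, ?_⟩
    · rw [Matrix.transpose_mul, Matrix.transpose_transpose]
    · have h1 : (X * Xᵀ).trace = ∑ i, ∑ j, (X i j)^2 := by
        rw [Matrix.trace_mul_comm, Stmt11Aux.sum_sq_eq_trace]
      have h2 : (Aᵀ * X).trace = ∑ i, ∑ j, A i j * X i j := by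
        rw [Finset.sum_comm]
        simp [Matrix.trace, Matrix.diag, Matrix.mul_apply]
      have hsum : ∑ i, ∑ j, (X i j - A i j)^2
          = (∑ i, ∑ j, (X i j)^2) - 2*(∑ i, ∑ j, A i j * X i j)
            + ∑ i, ∑ j, (A i j)^2 := by
        have hrow : ∀ i : Fin n, ∑ j, (X i j - A i j)^2
            = (∑ j, (X i j)^2) - 2*(∑ j, A i j * X i j) + ∑ j, (A i j)^2 := by
          intro i
          rw [Finset.mul_sum, ← Finset.sum_sub_distrib, ← Finset.sum_add_distrib]
          exact Finset.sum_congr rfl fun j _ => by ring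
        rw [Finset.sum_congr rfl fun i _ => hrow i, Finset.mul_sum,
          ← Finset.sum_sub_distrib, ← Finset.sum_add_distrib]
      rw [h1, h2, hsum]
      ring
  -- every SDP-feasible value dominates some low-rank approximation value
  have dom : ∀ v ∈ S2, ∃ Z : Matrix (Fin n) (Fin m) ℝ, Z.rank ≤ k ∧
      (1/2) * ∑ i, ∑ j, (Z i j - A i j)^2 ≤ v := by
    rintro v ⟨X, θ, Y, _hθ, _hYt, hYpsd, hY1, htr, hMpsd, rfl⟩
    exact Stmt11Aux.lb A X θ Y hYpsd hY1 htr hMpsd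
  have hbdd1 : BddBelow S1 := by
    refine ⟨0, ?_⟩
    rintro v ⟨X, _, rfl⟩
    positivity
  have hbdd2 : BddBelow S2 := by
    refine ⟨0, ?_⟩
    intro v hv
    obtain ⟨Z, _, hZv⟩ := dom v hv
    refine le_trans ?_ hZv
    positivity
  have hne1 : S1.Nonempty := ⟨_, ⟨0, h0rank, rfl⟩⟩
  have hne2 : S2.Nonempty := ⟨_, mem2 0 h0rank⟩
  apply le_antisymm
  · apply le_csInf hne2
    intro b hb
    obtain ⟨Z, hZr, hZv⟩ := dom b hb
    exact csInf_le_of_le hbdd1 ⟨Z, hZr, rfl⟩ hZv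
  · apply le_csInf hne1
    rintro b ⟨X, hXr, rfl⟩
    exact csInf_le hbdd2 (mem2 X hXr)
end

section
/- Let Y be an n×n real matrix with Yᵀ = Y and Y·Y = Y, let X be an n×m real matrix with Y·X = X, and let θ be an m×m real symmetric matrix. Then the (n+m)×(n+m) block matrix [[Y, X],[Xᵀ, θ]] is positive semidefinite if and only if θ − Xᵀ·X is positive semidefinite. (This is the semidefinite representation of the matrix perspective of the convex quadratic f(X) = XᵀX when the perspective variable Y is an orthogonal projection with X in its range, underlying the matrix-completion and reduced-rank reformulations.) -/
open Matrix

private lemma aux_dp {k l p : ℕ} (A : Matrix (Fin k) (Fin l) ℝ) (B : Matrix (Fin k) (Fin p) ℝ)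
    (u : Fin l → ℝ) (v : Fin p → ℝ) :
    (A *ᵥ u) ⬝ᵥ (B *ᵥ v) = u ⬝ᵥ ((Aᵀ * B) *ᵥ v) := by
  rw [← mulVec_mulVec, mulVec_transpose, dotProduct_comm, dotProduct_mulVec, dotProduct_comm]

/-- Semidefinite representation of the matrix perspective of `f(X) = XᵀX` when the
perspective variable `Y` is an orthogonal projection with `X` in its range. -/
theorem stmt_12 (n m : ℕ) (Y : Matrix (Fin n) (Fin n) ℝ) (X : Matrix (Fin n) (Fin m) ℝ)
    (θ : Matrix (Fin m) (Fin m) ℝ)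
    (hYs : Yᵀ = Y) (hYp : Y * Y = Y) (hYX : Y * X = X) (hθ : θᵀ = θ) :
    (Matrix.fromBlocks Y X Xᵀ θ).PosSemidef ↔ (θ - Xᵀ * X).PosSemidef := by
  have hct : ∀ {a b : Type} (M : Matrix a b ℝ), Mᴴ = Mᵀ := by
    intro a b M; ext i j; simp [conjTranspose_apply]
  have hXtY : Xᵀ * Y = Xᵀ := by
    have := congrArg Matrix.transpose hYX
    rwa [transpose_mul, hYs] at this
  have key : ∀ (x : Fin n → ℝ) (y : Fin m → ℝ),
      Sum.elim x y ⬝ᵥ (fromBlocks Y X Xᵀ θ) *ᵥ Sum.elim x y =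
      (Y *ᵥ x + X *ᵥ y) ⬝ᵥ (Y *ᵥ x + X *ᵥ y) + y ⬝ᵥ ((θ - Xᵀ * X) *ᵥ y) := by
    intro x y
    have expand : (Y *ᵥ x + X *ᵥ y) ⬝ᵥ (Y *ᵥ x + X *ᵥ y)
        = x ⬝ᵥ (Y *ᵥ x) + x ⬝ᵥ (X *ᵥ y) + (y ⬝ᵥ (Xᵀ *ᵥ x) + y ⬝ᵥ ((Xᵀ * X) *ᵥ y)) := by
      rw [add_dotProduct, dotProduct_add, dotProduct_add, aux_dp Y Y, aux_dp Y X,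
        aux_dp X Y, aux_dp X X, hYs, hYp, hYX, hXtY, ← mulVec_mulVec]
    rw [fromBlocks_mulVec, sumElim_dotProduct_sumElim, expand, sub_mulVec,
      dotProduct_sub, dotProduct_add, dotProduct_add]
    simp only [Sum.elim_comp_inl, Sum.elim_comp_inr]
    ring
  rw [posSemidef_iff_dotProduct_mulVec, posSemidef_iff_dotProduct_mulVec]
  constructor
  · rintro ⟨hherm, hpos⟩
    refine ⟨?_, fun v => ?_⟩
    · show (θ - Xᵀ * X)ᴴ = _
      rw [hct, transpose_sub, hθ, transpose_mul, transpose_transpose]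
    · have h := hpos (Sum.elim (-(X *ᵥ v)) v)
      rw [star_trivial, key] at h
      have h0 : Y *ᵥ (-(X *ᵥ v)) + X *ᵥ v = 0 := by
        rw [mulVec_neg, mulVec_mulVec, hYX, neg_add_cancel]
      rw [h0, zero_dotProduct, zero_add] at h
      rw [star_trivial]
      exact h
  · rintro ⟨hherm, hpos⟩
    refine ⟨?_, fun z => ?_⟩
    · show (fromBlocks Y X Xᵀ θ)ᴴ = _
      rw [hct, fromBlocks_transpose, hYs, hθ, transpose_transpose]
    · rw [star_trivial, ← Sum.elim_comp_inl_inr z, key]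
      have h1 : (0:ℝ) ≤ (Y *ᵥ (z ∘ Sum.inl) + X *ᵥ (z ∘ Sum.inr)) ⬝ᵥ
          (Y *ᵥ (z ∘ Sum.inl) + X *ᵥ (z ∘ Sum.inr)) := by
        apply Finset.sum_nonneg
        intro i _
        exact mul_self_nonneg _
      have h2 := hpos (z ∘ Sum.inr)
      rw [star_trivial] at h2
      exact add_nonneg h1 h2
end

section
/- Let B be a p×p real symmetric matrix, β a p×n real matrix, and W an n×n real matrix with Wᵀ = W and W·W = W. If the (p+n)×(p+n) block matrix [[B, β],[βᵀ, W]] is positive semidefinite, then β·W = β, and consequently rank(β) ≤ rank(W) = tr(W). (This is the paper's argument that the semidefinite relaxation of reduced-rank regression is valid: when W is a projection matrix of trace at most k appearing in a positive semidefinite block with β, the matrix β has rank at most k.) -/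
open Matrix

private lemma aux_quad (a b : ℝ) (ha0 : 0 ≤ a) (ha : ∀ t : ℝ, 0 ≤ a * t^2 + b * t) :
    b = 0 := by
  by_contra hb
  have h1 : (0:ℝ) < a + 1 := by linarith
  have hε : (0:ℝ) < (a+1)⁻¹ := inv_pos.mpr h1
  have hi : (a+1) * (a+1)⁻¹ = 1 := mul_inv_cancel₀ (ne_of_gt h1)
  have hb2 : 0 < b * b := mul_self_pos.mpr hb
  have ht := ha (-(b * (a+1)⁻¹))
  nlinarith [mul_pos (mul_pos hb2 hε) hε, mul_pos hb2 hε, hi]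

/-- If `[[B, β],[βᵀ, W]]` is positive semidefinite and `W` is an orthogonal projection,
then `β·W = β` and hence `rank(β) ≤ rank(W) = tr(W)`. -/
theorem stmt_13 (p n : ℕ) (B : Matrix (Fin p) (Fin p) ℝ) (β : Matrix (Fin p) (Fin n) ℝ)
    (W : Matrix (Fin n) (Fin n) ℝ) (hB : Bᵀ = B) (hWs : Wᵀ = W) (hWp : W * W = W)
    (h : (Matrix.fromBlocks B β βᵀ W).PosSemidef) :
    β * W = β ∧ β.rank ≤ W.rank ∧ (W.rank : ℝ) = W.trace := by
  have hBpsd : ∀ u : Fin p → ℝ, 0 ≤ u ⬝ᵥ (B *ᵥ u) := by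
    intro u
    have := h.dotProduct_mulVec_nonneg (Sum.elim u 0)
    rw [Matrix.fromBlocks_mulVec] at this
    simpa [sumElim_dotProduct_sumElim] using this
  have key : ∀ v : Fin n → ℝ, W *ᵥ v = 0 → β *ᵥ v = 0 := by
    intro v hv
    funext i
    have hb : ∀ u : Fin p → ℝ, u ⬝ᵥ (β *ᵥ v) = 0 := by
      intro u
      have hsym : v ⬝ᵥ (βᵀ *ᵥ u) = u ⬝ᵥ (β *ᵥ v) := by
        rw [Matrix.mulVec_transpose, Matrix.dotProduct_mulVec u β v, dotProduct_comm]
      have hq : ∀ t : ℝ, 0 ≤ (u ⬝ᵥ (B *ᵥ u)) * t^2 + (2 * (u ⬝ᵥ (β *ᵥ v))) * t := by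
        intro t
        have hps := h.dotProduct_mulVec_nonneg (Sum.elim (t • u) v)
        rw [Matrix.fromBlocks_mulVec] at hps
        simp only [RCLike.star_def, star_trivial, Sum.elim_comp_inl, Sum.elim_comp_inr] at hps
        rw [sumElim_dotProduct_sumElim, hv] at hps
        have e : (t • u) ⬝ᵥ (B *ᵥ (t • u) + β *ᵥ v) + v ⬝ᵥ (βᵀ *ᵥ (t • u) + (0 : Fin n → ℝ))
            = (u ⬝ᵥ (B *ᵥ u)) * t^2 + (2 * (u ⬝ᵥ (β *ᵥ v))) * t := by
          simp only [dotProduct_add, Matrix.mulVec_smul, dotProduct_smul, smul_dotProduct,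
            smul_eq_mul, dotProduct_zero, add_zero, hsym]
          ring
        rw [e] at hps
        exact hps
      have h2b := aux_quad _ _ (hBpsd u) hq
      linarith
    simpa using hb (Pi.single i 1)
  have hβW : β * W = β := by
    have h0 : β * (1 - W) = 0 := by
      ext i j
      have hv : W *ᵥ ((1 - W) *ᵥ Pi.single j 1) = 0 := by
        rw [Matrix.mulVec_mulVec, Matrix.mul_sub, Matrix.mul_one, hWp, sub_self,
          Matrix.zero_mulVec]
      have hz := congrFun (key _ hv) i
      rw [Matrix.mulVec_mulVec] at hz
      simpa [Matrix.mulVec, dotProduct, Pi.single_apply, mul_ite] using hz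
    rw [Matrix.mul_sub, Matrix.mul_one] at h0
    have := sub_eq_zero.mp h0
    exact this.symm
  refine ⟨hβW, ?_, ?_⟩
  · calc β.rank = (β * W).rank := by rw [hβW]
    _ ≤ W.rank := Matrix.rank_mul_le_right β W
  · rcases (LinearMap.isProj_iff_isIdempotentElem W.mulVecLin).2 (by
        rw [IsIdempotentElem, Module.End.mul_eq_comp, ← Matrix.mulVecLin_mul, hWp]) with ⟨q, hq⟩
    have hrange : LinearMap.range W.mulVecLin = q := by
      apply le_antisymm
      · rintro x ⟨y, rfl⟩; exact hq.map_mem y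
      · intro x hx; exact ⟨x, hq.map_id x hx⟩
    have htr : LinearMap.trace ℝ (Fin n → ℝ) W.mulVecLin = (Module.finrank ℝ q : ℝ) := hq.trace
    rw [Matrix.rank, hrange]
    rw [LinearMap.trace_eq_matrix_trace ℝ (Pi.basisFun ℝ (Fin n))] at htr
    rw [LinearMap.toMatrix_eq_toMatrix'] at htr
    have h2 : LinearMap.toMatrix' W.mulVecLin = W := LinearMap.toMatrix'_toLin' W
    rw [h2] at htr
    exact htr.symm
end

section
/- For every p×n real matrix β there exist an n×n real matrix W and a p×p real symmetric matrix θ such that: Wᵀ = W, W·W = W, tr(W) = rank(β), β·W = β, tr(θ) = ‖β‖_F², and the (p+n)×(p+n) block matrix [[θ, β],[βᵀ, W]] is positive semidefinite. (Hence the matrix-perspective semidefinite relaxation (minimizing (1/2m)‖Y − Xβ‖_F² + (1/2γ)tr(θ) + μ·tr(W) over W ⪯ I and [[θ, β],[βᵀ, W]] ⪰ 0) is a valid relaxation of Frobenius-regularized rank-penalized reduced rank regression: its optimal value is at most that of the original problem.) -/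
open Matrix BigOperators

/-- For every `p×n` real matrix `β` there is an orthogonal projection `W` with trace equal
to `rank(β)`, `β·W = β`, and a symmetric `θ` with `tr(θ) = ‖β‖_F²` such that the block
matrix `[[θ, β],[βᵀ, W]]` is positive semidefinite: validity of the matrix-perspective
relaxation of reduced rank regression. -/
theorem stmt_14 (p n : ℕ) (β : Matrix (Fin p) (Fin n) ℝ) :
    ∃ (W : Matrix (Fin n) (Fin n) ℝ) (θ : Matrix (Fin p) (Fin p) ℝ),
      Wᵀ = W ∧ W * W = W ∧ W.trace = (β.rank : ℝ) ∧ β * W = β ∧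
      θᵀ = θ ∧ θ.trace = ∑ i, ∑ j, (β i j) ^ 2 ∧
      (Matrix.fromBlocks θ β βᵀ W).PosSemidef := by
  classical
  set G : Matrix (Fin n) (Fin n) ℝ := βᵀ * β with hGdef
  have hG : G.IsHermitian := by
    rw [hGdef]
    have := Matrix.isHermitian_conjTranspose_mul_self β
    rwa [Matrix.conjTranspose_eq_transpose_of_trivial] at this
  set U : Matrix (Fin n) (Fin n) ℝ := (hG.eigenvectorUnitary : Matrix (Fin n) (Fin n) ℝ)
    with hUdef
  set μ : Fin n → ℝ := hG.eigenvalues with hμdef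
  have hUU : U * star U = 1 := (Matrix.mem_unitaryGroup_iff).mp hG.eigenvectorUnitary.2
  have hUU' : star U * U = 1 := (Matrix.mem_unitaryGroup_iff').mp hG.eigenvectorUnitary.2
  set E : Matrix (Fin n) (Fin n) ℝ :=
    Matrix.diagonal (fun i => if μ i = 0 then (0:ℝ) else 1) with hEdef
  set W : Matrix (Fin n) (Fin n) ℝ := U * E * star U with hWdef
  have hstarU : star U = Uᵀ := by
    rw [Matrix.star_eq_conjTranspose, Matrix.conjTranspose_eq_transpose_of_trivial]
  -- W symmetric
  have hWsymm : Wᵀ = W := by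
    rw [hWdef, hstarU, Matrix.transpose_mul, Matrix.transpose_mul,
      Matrix.transpose_transpose, Matrix.diagonal_transpose, Matrix.mul_assoc]
  -- W idempotent
  have hWW : W * W = W := by
    have hEE : E * E = E := by
      have hfun : (fun i => (if μ i = 0 then (0:ℝ) else 1) * (if μ i = 0 then (0:ℝ) else 1))
          = fun i => if μ i = 0 then (0:ℝ) else 1 := by
        funext i
        by_cases h : μ i = 0 <;> simp [h]
      rw [hEdef, Matrix.diagonal_mul_diagonal, hfun]
    calc U * E * star U * (U * E * star U)
        = U * E * (star U * U) * (E * star U) := by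
          simp only [Matrix.mul_assoc]
      _ = U * (E * E) * star U := by rw [hUU']; simp only [Matrix.mul_one, Matrix.mul_assoc]
      _ = U * E * star U := by rw [hEE, Matrix.mul_assoc]
  -- spectral theorem for G
  have hspec : G = U * Matrix.diagonal μ * star U := by
    have := hG.spectral_theorem
    simpa [hμdef, Function.comp] using this
  -- G * (1 - W) = 0
  have hGW : G * (1 - W) = 0 := by
    have h1 : (1 : Matrix (Fin n) (Fin n) ℝ) - W = U * (1 - E) * star U := by
      rw [Matrix.mul_sub, Matrix.sub_mul, Matrix.mul_one, hUU, hWdef]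
    have hD : Matrix.diagonal μ * (1 - E) = 0 := by
      have h1E : (1 : Matrix (Fin n) (Fin n) ℝ) - E
          = Matrix.diagonal (fun i => 1 - if μ i = 0 then (0:ℝ) else 1) := by
        rw [hEdef, ← Matrix.diagonal_one, Matrix.diagonal_sub]
      rw [h1E, Matrix.diagonal_mul_diagonal]
      have h0 : (fun i => μ i * (1 - if μ i = 0 then (0:ℝ) else 1)) = fun _ => 0 := by
        funext i
        by_cases h : μ i = 0 <;> simp [h]
      rw [h0, Matrix.diagonal_zero]
    calc G * (1 - W) = U * Matrix.diagonal μ * star U * (U * (1 - E) * star U) := by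
          rw [← hspec, ← h1]
      _ = U * Matrix.diagonal μ * (star U * U) * ((1 - E) * star U) := by
          simp only [Matrix.mul_assoc]
      _ = U * (Matrix.diagonal μ * (1 - E)) * star U := by
          rw [hUU']; simp only [Matrix.mul_one, Matrix.mul_assoc]
      _ = 0 := by rw [hD, Matrix.mul_zero, Matrix.zero_mul]
  -- β * W = β
  have hβW : β * W = β := by
    have h3 : (1 - W)ᵀ = 1 - W := by
      rw [Matrix.transpose_sub, Matrix.transpose_one, hWsymm]
    have h2 : (β * (1 - W))ᴴ * (β * (1 - W)) = 0 := by
      rw [Matrix.conjTranspose_eq_transpose_of_trivial, Matrix.transpose_mul, h3]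
      calc (1 - W) * βᵀ * (β * (1 - W)) = (1 - W) * (G * (1 - W)) := by
            rw [hGdef]; simp only [Matrix.mul_assoc]
        _ = 0 := by rw [hGW, Matrix.mul_zero]
    have key : β * (1 - W) = 0 := Matrix.conjTranspose_mul_self_eq_zero.mp h2
    have h4 : β - β * W = 0 := by
      have := key
      rw [Matrix.mul_sub, Matrix.mul_one] at this
      exact this
    exact (sub_eq_zero.mp h4).symm
  -- trace W = rank β
  have hWtr : W.trace = (β.rank : ℝ) := by
    have h1 : W.trace = E.trace := by
      rw [hWdef, Matrix.trace_mul_cycle, hUU', Matrix.one_mul]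
    have h2 : E.trace = (Fintype.card {i // μ i ≠ 0} : ℝ) := by
      rw [hEdef, Matrix.trace_diagonal]
      rw [Fintype.card_subtype]
      rw [Finset.card_filter]
      push_cast
      congr 1
      funext i
      by_cases h : μ i = 0 <;> simp [h]
    have h3 : G.rank = Fintype.card {i // μ i ≠ 0} := hG.rank_eq_card_non_zero_eigs
    have h4 : G.rank = β.rank := Matrix.rank_transpose_mul_self β
    rw [h1, h2, ← h3, h4]
  refine ⟨W, β * βᵀ, hWsymm, hWW, hWtr, hβW, ?_, ?_, ?_⟩
  · rw [Matrix.transpose_mul, Matrix.transpose_transpose]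
  · simp [Matrix.trace, Matrix.diag, Matrix.mul_apply, sq]
  · have hblk : Matrix.fromBlocks (β * βᵀ) β βᵀ W
        = Matrix.fromRows β W * (Matrix.fromRows β W)ᴴ := by
      have hWβ : W * βᵀ = βᵀ := by rw [← hWsymm, ← Matrix.transpose_mul, hβW]
      rw [Matrix.conjTranspose_eq_transpose_of_trivial, Matrix.transpose_fromRows,
        Matrix.fromRows_mul_fromCols, hWsymm, hβW, hWW, hWβ]
    rw [hblk]
    exact Matrix.posSemidef_self_mul_conjTranspose _
end

section
/- Let Y be an n×n real matrix with Yᵀ = Y and Y·Y = Y, let X be an n×n real symmetric matrix with X = Y·X, and let X̄ be an arbitrary n×n real symmetric matrix. Then tr(X·X) ≥ 2·tr(X̄·X) − tr(X̄·X̄·Y). Consequently, every ρ ∈ ℝ with ρ ≥ tr(X·X) satisfies the trace form of the generalized (matrix) perspective cut ρ ≥ ⟨X̄², Y⟩ + ⟨2X̄, X − X̄·Y⟩ associated with the quadratic f(X) = X² and subgradient S = 2X̄. (This generalizes the perspective cuts of mixed-integer optimization from cardinality to rank constraints.) -/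
open Matrix

/-- Trace form of the generalized (matrix) perspective cut associated with the quadratic
`f(X) = X²` and subgradient `S = 2X̄`, under the projection constraint `X = Y·X`. -/
theorem stmt_15 (n : ℕ) (Y X Xbar : Matrix (Fin n) (Fin n) ℝ)
    (hYs : Yᵀ = Y) (hYp : Y * Y = Y) (hXs : Xᵀ = X) (hX : X = Y * X)
    (hXbar : Xbarᵀ = Xbar) :
    2 * (Xbar * X).trace - (Xbar * Xbar * Y).trace ≤ (X * X).trace ∧
    ∀ ρ : ℝ, (X * X).trace ≤ ρ →
      ((Xbar * Xbar)ᵀ * Y).trace + (((2 : ℝ) • Xbar)ᵀ * (X - Xbar * Y)).trace ≤ ρ := by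
  have hXY : X * Y = X := by
    calc X * Y = Xᵀ * Y := by rw [hXs]
    _ = (Yᵀ * X)ᵀ := by rw [Matrix.transpose_mul, Matrix.transpose_transpose]
    _ = (Y * X)ᵀ := by rw [hYs]
    _ = Xᵀ := by rw [← hX]
    _ = X := hXs
  -- nonnegativity of trace of MᵀM
  set M := X - Xbar * Y with hM
  have h0 : 0 ≤ (Mᵀ * M).trace := by
    have : (Mᵀ * M).trace = ∑ j, ∑ i, M i j ^ 2 := by
      simp [Matrix.trace, Matrix.diag, Matrix.mul_apply, Matrix.transpose_apply, sq]
    rw [this]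
    positivity
  -- expand
  have hexp : (Mᵀ * M).trace
      = (X * X).trace - 2 * (Xbar * X).trace + (Xbar * Xbar * Y).trace := by
    have e1 : (Xᵀ * X).trace = (X * X).trace := by rw [hXs]
    have e2 : (Xᵀ * (Xbar * Y)).trace = (Xbar * X).trace := by
      rw [hXs, ← mul_assoc, Matrix.trace_mul_comm, ← mul_assoc, ← hX, Matrix.trace_mul_comm]
    have e3 : ((Xbar * Y)ᵀ * X).trace = (Xbar * X).trace := by
      rw [Matrix.transpose_mul, hYs, hXbar, mul_assoc, Matrix.trace_mul_comm,
        mul_assoc, hXY]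
    have e4 : ((Xbar * Y)ᵀ * (Xbar * Y)).trace = (Xbar * Xbar * Y).trace := by
      rw [Matrix.transpose_mul, hYs, hXbar, Matrix.trace_mul_comm]
      rw [show Xbar * Y * (Y * Xbar) = Xbar * (Y * Y) * Xbar by noncomm_ring,
        hYp, Matrix.trace_mul_comm, ← mul_assoc]
    rw [hM, Matrix.transpose_sub, Matrix.sub_mul, Matrix.mul_sub, Matrix.mul_sub,
      Matrix.trace_sub, Matrix.trace_sub, Matrix.trace_sub, e1, e2, e3, e4]
    ring
  have key : 2 * (Xbar * X).trace - (Xbar * Xbar * Y).trace ≤ (X * X).trace := by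
    linarith [h0, hexp.symm.le, hexp.le]
  refine ⟨key, fun ρ hρ => ?_⟩
  have : ((Xbar * Xbar)ᵀ * Y).trace + (((2 : ℝ) • Xbar)ᵀ * (X - Xbar * Y)).trace
      = 2 * (Xbar * X).trace - (Xbar * Xbar * Y).trace := by
    rw [Matrix.transpose_mul, hXbar, Matrix.transpose_smul, hXbar,
      Matrix.smul_mul, Matrix.trace_smul, Matrix.mul_sub, Matrix.trace_sub,
      ← mul_assoc]
    simp [smul_eq_mul]
    ring
  linarith [key, this.le]
end

section
/- Let M ≥ 0, let Y be an n×n real matrix with Yᵀ = Y and Y·Y = Y, and let X be an n×n real symmetric matrix with X = Y·X. Then (M·I − X is positive semidefinite and M·I + X is positive semidefinite) if and only if (M·Y − X is positive semidefinite and M·Y + X is positive semidefinite). (This is the paper's computation of the matrix perspective of the spectral-norm indicator function: under the projection constraint X = YX, the spectral bound ‖X‖_σ ≤ M is equivalent to the 'spectral big-M' constraint −M·Y ⪯ X ⪯ M·Y.) -/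
open Matrix

lemma psd_smul_aux {n : ℕ} {M : ℝ} (hM : 0 ≤ M) {A : Matrix (Fin n) (Fin n) ℝ}
    (hA : A.PosSemidef) : (M • A).PosSemidef := by
  refine ⟨?_, fun x => ?_⟩
  · unfold Matrix.IsHermitian
    rw [conjTranspose_smul, hA.1]
    simp
  · have := hA.2 x
    have e : (x.sum fun i xi => x.sum fun j xj => star xi * (M • A) i j * xj)
        = M * (x.sum fun i xi => x.sum fun j xj => star xi * A i j * xj) := by
      simp only [Finsupp.mul_sum, Matrix.smul_apply, smul_eq_mul]
      apply Finsupp.sum_congr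
      intro i _
      apply Finsupp.sum_congr
      intro j _
      ring
    rw [e]
    exact mul_nonneg hM this

/-- Matrix perspective of the spectral-norm indicator: under the projection constraint
`X = Y·X`, the spectral bound `‖X‖_σ ≤ M` (i.e. `−M·I ⪯ X ⪯ M·I`) is equivalent to the
spectral big-M constraint `−M·Y ⪯ X ⪯ M·Y`. -/
theorem stmt_16 (n : ℕ) (M : ℝ) (hM : 0 ≤ M) (Y X : Matrix (Fin n) (Fin n) ℝ)
    (hYs : Yᵀ = Y) (hYp : Y * Y = Y) (hXs : Xᵀ = X) (hX : X = Y * X) :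
    ((M • (1 : Matrix (Fin n) (Fin n) ℝ) - X).PosSemidef ∧
        (M • (1 : Matrix (Fin n) (Fin n) ℝ) + X).PosSemidef)
      ↔ ((M • Y - X).PosSemidef ∧ (M • Y + X).PosSemidef) := by
  have hXY : X * Y = X := by
    have h := congrArg Matrix.transpose hX
    rw [transpose_mul, hXs, hYs] at h
    exact h.symm
  have hYH : Yᴴ = Y := by
    ext i j
    simp only [conjTranspose_apply, star_trivial]
    exact congrFun (congrFun hYs i) j
  have hIY : (M • ((1 : Matrix (Fin n) (Fin n) ℝ) - Y)).PosSemidef := by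
    apply psd_smul_aux hM
    have e : (1 : Matrix (Fin n) (Fin n) ℝ) - Y
        = ((1:Matrix (Fin n) (Fin n) ℝ) - Y)ᴴ * ((1:Matrix (Fin n) (Fin n) ℝ) - Y) := by
      rw [conjTranspose_sub, conjTranspose_one, hYH, Matrix.sub_mul, Matrix.mul_sub,
        Matrix.mul_sub, mul_one, one_mul, mul_one, hYp]
      abel
    rw [e]
    exact posSemidef_conjTranspose_mul_self _
  constructor
  · rintro ⟨h1, h2⟩
    constructor
    · have := h1.mul_mul_conjTranspose_same Y
      have e : Y * (M • (1 : Matrix (Fin n) (Fin n) ℝ) - X) * Yᴴ = M • Y - X := by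
        rw [hYH, Matrix.mul_sub, Matrix.sub_mul, Matrix.mul_smul, mul_one, Matrix.smul_mul, hYp,
          ← hX, hXY]
      rwa [e] at this
    · have := h2.mul_mul_conjTranspose_same Y
      have e : Y * (M • (1 : Matrix (Fin n) (Fin n) ℝ) + X) * Yᴴ = M • Y + X := by
        rw [hYH, Matrix.mul_add, Matrix.add_mul, Matrix.mul_smul, mul_one, Matrix.smul_mul, hYp,
          ← hX, hXY]
      rwa [e] at this
  · rintro ⟨h1, h2⟩
    constructor
    · have := h1.add hIY
      have e : (M • Y - X) + M • ((1 : Matrix (Fin n) (Fin n) ℝ) - Y)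
          = M • (1 : Matrix (Fin n) (Fin n) ℝ) - X := by
        rw [smul_sub]; abel
      rwa [e] at this
    · have := h2.add hIY
      have e : (M • Y + X) + M • ((1 : Matrix (Fin n) (Fin n) ℝ) - Y)
          = M • (1 : Matrix (Fin n) (Fin n) ℝ) + X := by
        rw [smul_sub]; abel
      rwa [e] at this
end

section
/- Let n ≥ 1 and let k be a natural number with k ≤ n. The convex hull of the set 𝒴ᵏ_n = { Y : Y an n×n real matrix, Yᵀ = Y, Y·Y = Y, tr(Y) ≤ k } of orthogonal projection matrices with trace at most k equals { Y : Y an n×n real symmetric matrix such that Y is positive semidefinite, I − Y is positive semidefinite, and tr(Y) ≤ k }. -/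
open Matrix Finset

def zeroOneSet (n k : ℕ) : Set (Fin n → ℝ) :=
  {χ | (∀ i, χ i = 0 ∨ χ i = 1) ∧ ∑ i, χ i ≤ (k : ℝ)}

lemma cube_mem_convexHull (n k : ℕ) :
    ∀ (m : ℕ) (x : Fin n → ℝ),
      (Finset.univ.filter (fun i => x i ≠ 0 ∧ x i ≠ 1)).card ≤ m →
      (∀ i, 0 ≤ x i) → (∀ i, x i ≤ 1) → ∑ i, x i ≤ (k : ℝ) →
      x ∈ convexHull ℝ (zeroOneSet n k) := by
  intro m
  induction m with
  | zero =>
    intro x hcard h0 h1 hsum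
    apply subset_convexHull
    refine ⟨fun i => ?_, hsum⟩
    by_contra hi
    push_neg at hi
    have : i ∈ Finset.univ.filter (fun i => x i ≠ 0 ∧ x i ≠ 1) := by
      simp [hi.1, hi.2]
    simp [Finset.card_eq_zero.mp (Nat.le_zero.mp hcard)] at this
  | succ m ih =>
    intro x hcard h0 h1 hsum
    by_cases hle : (Finset.univ.filter (fun i => x i ≠ 0 ∧ x i ≠ 1)).card ≤ m
    · exact ih x hle h0 h1 hsum
    push_neg at hle
    have hcard' : (Finset.univ.filter (fun i => x i ≠ 0 ∧ x i ≠ 1)).card = m + 1 :=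
      le_antisymm hcard hle
    have hne : (Finset.univ.filter (fun i => x i ≠ 0 ∧ x i ≠ 1)).Nonempty := by
      rw [← Finset.card_pos, hcard']; omega
    obtain ⟨i, hi⟩ := hne
    rw [Finset.mem_filter] at hi
    have hxi0 : 0 < x i := lt_of_le_of_ne (h0 i) (Ne.symm hi.2.1)
    have hxi1 : x i < 1 := lt_of_le_of_ne (h1 i) hi.2.2
    by_cases hj : ∃ j, j ≠ i ∧ x j ≠ 0 ∧ x j ≠ 1
    · -- two fractional coordinates
      obtain ⟨j, hji, hj0, hj1⟩ := hj
      have hxj0 : 0 < x j := lt_of_le_of_ne (h0 j) (Ne.symm hj0)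
      have hxj1 : x j < 1 := lt_of_le_of_ne (h1 j) hj1
      set a : ℝ := min (x i) (1 - x j) with ha_def
      set b : ℝ := min (1 - x i) (x j) with hb_def
      have ha : 0 < a := lt_min hxi0 (by linarith)
      have hb : 0 < b := lt_min (by linarith) hxj0
      have hab : (0:ℝ) < a + b := by linarith
      set y : Fin n → ℝ := fun l => x l + (-a) * (if l = i then 1 else 0)
          + a * (if l = j then 1 else 0) with hy_def
      set z : Fin n → ℝ := fun l => x l + b * (if l = i then 1 else 0)
          + (-b) * (if l = j then 1 else 0) with hz_def
      have hij : i ≠ j := fun h => hji (h.symm)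
      have hyi : y i = x i - a := by simp [hy_def, hij]; ring
      have hyj : y j = x j + a := by simp [hy_def, hij.symm]
      have hzi : z i = x i + b := by simp [hz_def, hij]
      have hzj : z j = x j - b := by simp [hz_def, hij.symm]; ring
      have hyo : ∀ l, l ≠ i → l ≠ j → y l = x l := by
        intro l hl1 hl2; simp [hy_def, hl1, hl2]
      have hzo : ∀ l, l ≠ i → l ≠ j → z l = x l := by
        intro l hl1 hl2; simp [hz_def, hl1, hl2]
      have hsumy : ∑ l, y l = ∑ l, x l := by
        simp only [hy_def]
        rw [Finset.sum_add_distrib, Finset.sum_add_distrib, ← Finset.mul_sum, ← Finset.mul_sum]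
        simp
      have hsumz : ∑ l, z l = ∑ l, x l := by
        simp only [hz_def]
        rw [Finset.sum_add_distrib, Finset.sum_add_distrib, ← Finset.mul_sum, ← Finset.mul_sum]
        simp
      have hy0 : ∀ l, 0 ≤ y l := by
        intro l
        rcases eq_or_ne l i with rfl | hli
        · rw [hyi]; have := min_le_left (x l) (1 - x j); rw [← ha_def] at this; linarith
        rcases eq_or_ne l j with rfl | hlj
        · rw [hyj]; linarith [h0 l, ha.le]
        · rw [hyo l hli hlj]; exact h0 l
      have hy1 : ∀ l, y l ≤ 1 := by
        intro l
        rcases eq_or_ne l i with rfl | hli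
        · rw [hyi]; linarith [h1 l, ha.le]
        rcases eq_or_ne l j with rfl | hlj
        · rw [hyj]; have := min_le_right (x i) (1 - x l); rw [← ha_def] at this; linarith
        · rw [hyo l hli hlj]; exact h1 l
      have hz0 : ∀ l, 0 ≤ z l := by
        intro l
        rcases eq_or_ne l i with rfl | hli
        · rw [hzi]; linarith [h0 l, hb.le]
        rcases eq_or_ne l j with rfl | hlj
        · rw [hzj]; have := min_le_right (1 - x i) (x l); rw [← hb_def] at this; linarith
        · rw [hzo l hli hlj]; exact h0 l
      have hz1 : ∀ l, z l ≤ 1 := by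
        intro l
        rcases eq_or_ne l i with rfl | hli
        · rw [hzi]; have := min_le_left (1 - x l) (x j); rw [← hb_def] at this; linarith
        rcases eq_or_ne l j with rfl | hlj
        · rw [hzj]; linarith [h1 l, hb.le]
        · rw [hzo l hli hlj]; exact h1 l
      have hsub : ∀ (w : Fin n → ℝ), (∀ l, l ≠ i → l ≠ j → w l = x l) →
          (Finset.univ.filter (fun l => w l ≠ 0 ∧ w l ≠ 1)) ⊆
          (Finset.univ.filter (fun l => x l ≠ 0 ∧ x l ≠ 1)) := by
        intro w hw l hl
        rw [Finset.mem_filter] at hl ⊢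
        refine ⟨Finset.mem_univ _, ?_⟩
        rcases eq_or_ne l i with rfl | hli
        · exact hi.2
        rcases eq_or_ne l j with rfl | hlj
        · exact ⟨hj0, hj1⟩
        · rw [hw l hli hlj] at hl; exact hl.2
      have hycard : (Finset.univ.filter (fun l => y l ≠ 0 ∧ y l ≠ 1)).card ≤ m := by
        have hss : (Finset.univ.filter (fun l => y l ≠ 0 ∧ y l ≠ 1)) ⊂
            (Finset.univ.filter (fun l => x l ≠ 0 ∧ x l ≠ 1)) := by
          rw [Finset.ssubset_iff_of_subset (hsub y hyo)]
          rcases min_cases (x i) (1 - x j) with ⟨heq, _⟩ | ⟨heq, _⟩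
          · have h0' : y i = 0 := by rw [hyi, ha_def, heq]; ring
            exact ⟨i, Finset.mem_filter.mpr ⟨Finset.mem_univ _, hi.2⟩,
              by simp [Finset.mem_filter, h0']⟩
          · have h1' : y j = 1 := by rw [hyj, ha_def, heq]; ring
            exact ⟨j, Finset.mem_filter.mpr ⟨Finset.mem_univ _, hj0, hj1⟩,
              by simp [Finset.mem_filter, h1']⟩
        have := Finset.card_lt_card hss
        omega
      have hzcard : (Finset.univ.filter (fun l => z l ≠ 0 ∧ z l ≠ 1)).card ≤ m := by
        have hss : (Finset.univ.filter (fun l => z l ≠ 0 ∧ z l ≠ 1)) ⊂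
            (Finset.univ.filter (fun l => x l ≠ 0 ∧ x l ≠ 1)) := by
          rw [Finset.ssubset_iff_of_subset (hsub z hzo)]
          rcases min_cases (1 - x i) (x j) with ⟨heq, _⟩ | ⟨heq, _⟩
          · have h1' : z i = 1 := by rw [hzi, hb_def, heq]; ring
            exact ⟨i, Finset.mem_filter.mpr ⟨Finset.mem_univ _, hi.2⟩,
              by simp [Finset.mem_filter, h1']⟩
          · have h0' : z j = 0 := by rw [hzj, hb_def, heq]; ring
            exact ⟨j, Finset.mem_filter.mpr ⟨Finset.mem_univ _, hj0, hj1⟩,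
              by simp [Finset.mem_filter, h0']⟩
        have := Finset.card_lt_card hss
        omega
      have hymem := ih y hycard hy0 hy1 (hsumy ▸ hsum)
      have hzmem := ih z hzcard hz0 hz1 (hsumz ▸ hsum)
      have hcomb : x = (b/(a+b)) • y + (a/(a+b)) • z := by
        funext l
        simp only [Pi.add_apply, Pi.smul_apply, smul_eq_mul, hy_def, hz_def]
        rcases eq_or_ne l i with rfl | hli
        · simp only [if_pos rfl, if_neg hij]
          field_simp
          ring
        rcases eq_or_ne l j with rfl | hlj
        · simp only [if_pos rfl, if_neg hli]
          field_simp
          ring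
        · simp only [if_neg hli, if_neg hlj]
          field_simp
          ring
      rw [hcomb]
      exact (convex_convexHull ℝ _) hymem hzmem (div_nonneg hb.le hab.le)
        (div_nonneg ha.le hab.le)
        (by rw [← add_div, add_comm b a, div_self hab.ne'])
    · -- only one fractional coordinate
      push_neg at hj
      have hB : ∀ l, l ≠ i → x l = 0 ∨ x l = 1 := by
        intro l hl
        by_contra h
        push_neg at h
        exact h.2 (hj l hl h.1)
      set y : Fin n → ℝ := Function.update x i 0 with hy_def
      set z : Fin n → ℝ := Function.update x i 1 with hz_def
      set N : ℕ := ((Finset.univ.erase i).filter (fun l => x l = 1)).card with hN_def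
      have herase : ∑ l ∈ Finset.univ.erase i, x l = (N : ℝ) := by
        rw [← Finset.sum_filter_add_sum_filter_not (Finset.univ.erase i) (fun l => x l = 1)]
        have h1' : ∑ l ∈ (Finset.univ.erase i).filter (fun l => x l = 1), x l = (N : ℝ) := by
          rw [Finset.sum_congr rfl (fun l hl => (Finset.mem_filter.mp hl).2)]
          simp [hN_def]
        have h2' : ∑ l ∈ (Finset.univ.erase i).filter (fun l => ¬ x l = 1), x l = 0 := by
          apply Finset.sum_eq_zero
          intro l hl
          rw [Finset.mem_filter, Finset.mem_erase] at hl
          rcases hB l hl.1.1 with h | h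
          · exact h
          · exact absurd h hl.2
        rw [h1', h2', add_zero]
      have hsumx : ∑ l, x l = x i + (N : ℝ) := by
        rw [← Finset.add_sum_erase _ _ (Finset.mem_univ i), herase]
      have hNk : (N : ℝ) + 1 ≤ (k : ℝ) := by
        have : (N : ℝ) < (k : ℝ) := by rw [hsumx] at hsum; linarith
        have : N < k := by exact_mod_cast this
        exact_mod_cast this
      have hsumy : ∑ l, y l = (N : ℝ) := by
        rw [hy_def, ← Finset.add_sum_erase _ _ (Finset.mem_univ i)]
        rw [Function.update_self]
        rw [Finset.sum_congr rfl (fun l hl =>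
          Function.update_of_ne (Finset.mem_erase.mp hl).1 _ _)]
        rw [herase, zero_add]
      have hsumz : ∑ l, z l = 1 + (N : ℝ) := by
        rw [hz_def, ← Finset.add_sum_erase _ _ (Finset.mem_univ i)]
        rw [Function.update_self]
        rw [Finset.sum_congr rfl (fun l hl =>
          Function.update_of_ne (Finset.mem_erase.mp hl).1 _ _)]
        rw [herase]
      have hy01 : ∀ l, y l = 0 ∨ y l = 1 := by
        intro l
        rcases eq_or_ne l i with rfl | hl
        · left; simp [hy_def]
        · rw [hy_def, Function.update_of_ne hl]; exact hB l hl
      have hz01 : ∀ l, z l = 0 ∨ z l = 1 := by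
        intro l
        rcases eq_or_ne l i with rfl | hl
        · right; simp [hz_def]
        · rw [hz_def, Function.update_of_ne hl]; exact hB l hl
      have hymem : y ∈ convexHull ℝ (zeroOneSet n k) := by
        apply subset_convexHull
        exact ⟨hy01, by rw [hsumy]; linarith⟩
      have hzmem : z ∈ convexHull ℝ (zeroOneSet n k) := by
        apply subset_convexHull
        exact ⟨hz01, by rw [hsumz]; linarith⟩
      have hcomb : x = (1 - x i) • y + (x i) • z := by
        funext l
        simp only [Pi.add_apply, Pi.smul_apply, smul_eq_mul]
        rcases eq_or_ne l i with rfl | hl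
        · simp [hy_def, hz_def]
        · rw [hy_def, hz_def, Function.update_of_ne hl, Function.update_of_ne hl]; ring
      rw [hcomb]
      exact (convex_convexHull ℝ _) hymem hzmem (by linarith) hxi0.le (by ring)


section helpers

lemma psd_smul_real {n : ℕ} {A : Matrix (Fin n) (Fin n) ℝ} (hA : A.PosSemidef)
    {a : ℝ} (ha : 0 ≤ a) : (a • A).PosSemidef := by
  constructor
  · unfold Matrix.IsHermitian
    rw [conjTranspose_smul, hA.1]
    simp
  · intro x
    exact (hA.smul ha).2 x

lemma conjT_eq_transpose {n : ℕ} (A : Matrix (Fin n) (Fin n) ℝ) : Aᴴ = Aᵀ :=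
  Matrix.conjTranspose_eq_transpose_of_trivial A

end helpers

/-- The convex hull of the set of `n×n` orthogonal projection matrices with trace at most
`k` is `{Y : 0 ⪯ Y ⪯ I, tr(Y) ≤ k}`. -/
theorem stmt_17 (n k : ℕ) (hn : 1 ≤ n) (hk : k ≤ n) :
    convexHull ℝ
      {Y : Matrix (Fin n) (Fin n) ℝ | Yᵀ = Y ∧ Y * Y = Y ∧ Y.trace ≤ (k : ℝ)}
    = {Y : Matrix (Fin n) (Fin n) ℝ |
        Y.PosSemidef ∧ (1 - Y).PosSemidef ∧ Y.trace ≤ (k : ℝ)} := by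
  have cube : ∀ x : Fin n → ℝ, (∀ i, 0 ≤ x i) → (∀ i, x i ≤ 1) → ∑ i, x i ≤ (k : ℝ) →
      x ∈ convexHull ℝ {χ : Fin n → ℝ | (∀ i, χ i = 0 ∨ χ i = 1) ∧ ∑ i, χ i ≤ (k : ℝ)} :=
    fun x h0 h1 hs => cube_mem_convexHull n k _ x le_rfl h0 h1 hs
  apply Set.Subset.antisymm
  · -- easy direction
    apply convexHull_min
    · rintro Y ⟨hsym, hidem, htr⟩
      have hH : Yᴴ = Y := by rw [conjT_eq_transpose]; exact hsym
      refine ⟨?_, ?_, htr⟩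
      · have : Y = Yᴴ * Y := by rw [hH, hidem]
        rw [this]; exact posSemidef_conjTranspose_mul_self Y
      · have h1 : (1 - Y)ᴴ = 1 - Y := by
          rw [conjTranspose_sub, conjTranspose_one, hH]
        have h2 : (1 - Y) * (1 - Y) = 1 - Y := by
          rw [sub_mul, mul_sub, mul_sub, one_mul, mul_one, hidem]
          simp
        have : (1 - Y) = (1 - Y)ᴴ * (1 - Y) := by rw [h1, h2]
        rw [this]; exact posSemidef_conjTranspose_mul_self _
    · -- convexity of the target
      rintro A ⟨hA1, hA2, hA3⟩ B ⟨hB1, hB2, hB3⟩ a b ha hb hab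
      refine ⟨(psd_smul_real hA1 ha).add (psd_smul_real hB1 hb), ?_, ?_⟩
      · have : (1 : Matrix (Fin n) (Fin n) ℝ) - (a • A + b • B)
            = a • (1 - A) + b • (1 - B) := by
          rw [smul_sub, smul_sub]
          rw [show (a • (1:Matrix (Fin n) (Fin n) ℝ) - a • A + (b • 1 - b • B))
            = (a + b) • (1:Matrix (Fin n) (Fin n) ℝ) - (a • A + b • B) by module]
          rw [hab, one_smul]
        rw [this]
        exact (psd_smul_real hA2 ha).add (psd_smul_real hB2 hb)
      · rw [trace_add, trace_smul, trace_smul]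
        calc a • A.trace + b • B.trace ≤ a • (k:ℝ) + b • (k:ℝ) := by
              apply add_le_add
              · exact smul_le_smul_of_nonneg_left hA3 ha
              · exact smul_le_smul_of_nonneg_left hB3 hb
          _ = (k : ℝ) := by rw [smul_eq_mul, smul_eq_mul, ← add_mul, hab, one_mul]
  · -- hard direction
    rintro Y ⟨hY, hY1, htr⟩
    have hH := hY.1
    set U : Matrix (Fin n) (Fin n) ℝ := (Matrix.IsHermitian.eigenvectorUnitary hH : Matrix (Fin n) (Fin n) ℝ) with hU_def
    set ev : Fin n → ℝ := hH.eigenvalues with hev_def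
    have hUU : U * star U = 1 := (Matrix.mem_unitaryGroup_iff).mp (Matrix.IsHermitian.eigenvectorUnitary hH).2
    have hUU' : star U * U = 1 := (Matrix.mem_unitaryGroup_iff').mp (Matrix.IsHermitian.eigenvectorUnitary hH).2
    have hdiag : star U * Y * U = Matrix.diagonal ev := by
      have := hH.conjStarAlgAut_star_eigenvectorUnitary
      rwa [Unitary.conjStarAlgAut_star_apply, RCLike.ofReal_real_eq_id, Function.id_comp] at this
    have hspec : Y = U * Matrix.diagonal ev * star U := by
      have := hH.spectral_theorem
      rwa [Unitary.conjStarAlgAut_apply, RCLike.ofReal_real_eq_id, Function.id_comp] at this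
    -- eigenvalue bounds
    have h0 : ∀ i, 0 ≤ ev i := hY.eigenvalues_nonneg
    have h1 : ∀ i, ev i ≤ 1 := by
      intro i
      have hP : (star U * (1 - Y) * U).PosSemidef := hY1.conjTranspose_mul_mul_same U
      have heq : star U * (1 - Y) * U = Matrix.diagonal (fun i => 1 - ev i) := by
        rw [mul_sub, sub_mul, mul_one, hUU', hdiag]
        ext a b
        by_cases hab : a = b <;> simp [Matrix.diagonal, hab]
      rw [heq] at hP
      have := posSemidef_diagonal_iff.mp hP i
      linarith
    -- trace = sum of eigenvalues
    have htrace : Y.trace = ∑ i, ev i := by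
      rw [hspec, Matrix.trace_mul_cycle, hUU', one_mul, Matrix.trace_diagonal]
    -- the linear map v ↦ U * diagonal v * star U
    set L : (Fin n → ℝ) →ₗ[ℝ] Matrix (Fin n) (Fin n) ℝ :=
      { toFun := fun v => U * Matrix.diagonal v * star U
        map_add' := by
          intro v w
          have hd : Matrix.diagonal (v + w) = Matrix.diagonal v + Matrix.diagonal w := by
            ext a b
            by_cases h : a = b <;> simp [h, Matrix.diagonal]
          rw [hd, mul_add, add_mul]
        map_smul' := by
          intro c v
          rw [Matrix.diagonal_smul, Matrix.mul_smul, Matrix.smul_mul, RingHom.id_apply] } with hL_def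
    have hYL : Y = L ev := hspec
    have hev_mem : ev ∈ convexHull ℝ {χ : Fin n → ℝ | (∀ i, χ i = 0 ∨ χ i = 1) ∧ ∑ i, χ i ≤ (k : ℝ)} :=
      cube ev h0 h1 (htrace ▸ htr)
    have hmem : Y ∈ L '' (convexHull ℝ {χ : Fin n → ℝ | (∀ i, χ i = 0 ∨ χ i = 1) ∧ ∑ i, χ i ≤ (k : ℝ)}) :=
      ⟨ev, hev_mem, hYL.symm⟩
    rw [L.image_convexHull] at hmem
    refine convexHull_mono ?_ hmem
    rintro P ⟨χ, ⟨hχ01, hχsum⟩, rfl⟩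
    simp only [hL_def, LinearMap.coe_mk, AddHom.coe_mk, Set.mem_setOf_eq]
    have hχχ : Matrix.diagonal χ * Matrix.diagonal χ = Matrix.diagonal χ := by
      rw [Matrix.diagonal_mul_diagonal]
      have : (fun i => χ i * χ i) = χ := funext fun i => by
        rcases hχ01 i with h | h <;> rw [h] <;> ring
      rw [this]
    have hdH : (Matrix.diagonal χ)ᴴ = Matrix.diagonal χ := by
      rw [conjT_eq_transpose, Matrix.diagonal_transpose]
    refine ⟨?_, ?_, ?_⟩
    · rw [← conjT_eq_transpose]
      rw [conjTranspose_mul, conjTranspose_mul, hdH, star_eq_conjTranspose,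
        conjTranspose_conjTranspose, ← star_eq_conjTranspose, mul_assoc]
    · show U * Matrix.diagonal χ * star U * (U * Matrix.diagonal χ * star U)
          = U * Matrix.diagonal χ * star U
      simp only [mul_assoc]
      rw [← mul_assoc (star U) U, hUU', one_mul, ← mul_assoc (Matrix.diagonal χ), hχχ]
    · rw [Matrix.trace_mul_cycle, hUU', one_mul, Matrix.trace_diagonal]
      exact hχsum
end
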